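/- Let X_1,…,X_{N²} be an orthonormal basis of the real vector space of N×N skew-Hermitian complex matrices with respect to the real inner product ⟨X,Y⟩ = N·Re(trace(X*Y)). Then for every A ∈ M_N(ℂ): ∑_{j=1}^{N²} X_j·A·X_j = −tr(A)·I, where tr(A) = (1/N)·trace(A) is the normalized trace and I is the N×N identity matrix. -/

import Mathlib

open Matrix

/-- If `X₁, …, X_{N²}` is an orthonormal basis of the real vector space of `N × N`
skew-Hermitian matrices with respect to the inner product `⟨X,Y⟩ = N·Re(trace(XᴴY))`, then
`∑ⱼ Xⱼ A Xⱼ = −tr(A)·I` for every `A ∈ M_N(ℂ)`, where `tr` is the normalized trace. -/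
theorem sum_skewHermitian_conjugation {N : ℕ}
    (X : Fin (N ^ 2) → Matrix (Fin N) (Fin N) ℂ)
    (hskew : ∀ j, (X j)ᴴ = -(X j))
    (horth : ∀ j k, (N : ℝ) * ((X j)ᴴ * X k).trace.re = if j = k then 1 else 0)
    (hspan : ∀ A : Matrix (Fin N) (Fin N) ℂ, Aᴴ = -A →
      A ∈ Submodule.span ℝ (Set.range X)) :
    ∀ A : Matrix (Fin N) (Fin N) ℂ,
      ∑ j, X j * A * X j = (-((N : ℂ)⁻¹ * A.trace)) • (1 : Matrix (Fin N) (Fin N) ℂ) := by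
  have hconj : ∀ j a b, (starRingEnd ℂ) (X j b a) = -(X j a b) := by
    intro j a b
    have := congrFun (congrFun (hskew j) a) b
    simpa [Matrix.conjTranspose_apply] using this
  -- completeness relation
  have hcomp : ∀ Y : Matrix (Fin N) (Fin N) ℂ, Yᴴ = -Y →
      Y = ∑ j, ((N : ℝ) * ((X j)ᴴ * Y).trace.re) • X j := by
    intro Y hY
    obtain ⟨c, hc⟩ := (Submodule.mem_span_range_iff_exists_fun ℝ).mp (hspan Y hY)
    have hcoef : ∀ j, (N : ℝ) * ((X j)ᴴ * Y).trace.re = c j := by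
      intro j
      rw [← hc]
      have h1 : ((X j)ᴴ * ∑ k, c k • X k).trace.re
          = ∑ k, c k * ((X j)ᴴ * X k).trace.re := by
        rw [Matrix.mul_sum, Matrix.trace_sum, Complex.re_sum]
        refine Finset.sum_congr rfl fun k _ => ?_
        rw [Matrix.mul_smul, Matrix.trace_smul]
        simp [Complex.real_smul]
      rw [h1, Finset.mul_sum]
      have h2 : ∀ k ∈ Finset.univ, (N : ℝ) * (c k * ((X j)ᴴ * X k).trace.re)
          = if j = k then c k else 0 := by
        intro k _
        rw [mul_comm (c k), ← mul_assoc, horth j k]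
        by_cases h : j = k <;> simp [h]
      rw [Finset.sum_congr rfl h2, Finset.sum_ite_eq]
      simp
    calc Y = ∑ j, c j • X j := hc.symm
      _ = ∑ j, ((N : ℝ) * ((X j)ᴴ * Y).trace.re) • X j :=
          Finset.sum_congr rfl fun j _ => by rw [hcoef j]
  -- trace against a std basis matrix
  have htr : ∀ (B : Matrix (Fin N) (Fin N) ℂ) (c d : Fin N),
      (Bᴴ * Matrix.single c d (1 : ℂ)).trace = (starRingEnd ℂ) (B c d) := by
    intro B c d
    simp [Matrix.trace, Matrix.diag, Matrix.mul_apply, Matrix.single,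
      Matrix.conjTranspose_apply, mul_ite, ite_and, Finset.sum_ite_eq]
  -- the key tensor identity
  have hH : ∀ p r c d : Fin N, (∑ j, X j p r * (starRingEnd ℂ) (X j c d))
      = if p = c ∧ r = d then (N : ℂ)⁻¹ else 0 := by
    intro p r c d
    have hN : (N : ℂ) ≠ 0 := Nat.cast_ne_zero.mpr (Fin.pos p).ne'
    set Y1 : Matrix (Fin N) (Fin N) ℂ :=
      Matrix.single c d (1 : ℂ) - Matrix.single d c (1 : ℂ) with hY1def
    set Y2 : Matrix (Fin N) (Fin N) ℂ :=
      Complex.I • (Matrix.single c d (1 : ℂ) + Matrix.single d c (1 : ℂ)) with hY2def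
    have hY1 : Y1ᴴ = -Y1 := by
      ext a b
      simp [hY1def, Matrix.conjTranspose_apply, Matrix.single, and_comm]
    have hherm : (Matrix.single c d (1 : ℂ) + Matrix.single d c (1 : ℂ))ᴴ
        = Matrix.single c d (1 : ℂ) + Matrix.single d c (1 : ℂ) := by
      ext a b
      simp [Matrix.conjTranspose_apply, Matrix.single, and_comm, add_comm]
    have hY2 : Y2ᴴ = -Y2 := by
      rw [hY2def, Matrix.conjTranspose_smul, hherm]
      simp [Complex.conj_I]
      exact add_comm _ _
    -- coefficients
    have hc1 : ∀ j, (N : ℝ) * ((X j)ᴴ * Y1).trace.re = 2 * N * (X j c d).re := by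
      intro j
      rw [hY1def, Matrix.mul_sub, Matrix.trace_sub, htr, htr]
      have h := hconj j c d
      rw [h]
      simp [Complex.sub_re]
      ring
    have hc2 : ∀ j, (N : ℝ) * ((X j)ᴴ * Y2).trace.re = 2 * N * (X j c d).im := by
      intro j
      rw [hY2def, Matrix.mul_smul, Matrix.trace_smul, Matrix.mul_add, Matrix.trace_add,
        htr, htr]
      have h := hconj j c d
      rw [h]
      simp [Complex.add_re, Complex.smul_re]
      ring
    -- entrywise equations
    have e1 : (if c = p ∧ d = r then (1 : ℂ) else 0) - (if d = p ∧ c = r then 1 else 0)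
        = 2 * (N : ℂ) * ∑ j, ((X j c d).re : ℂ) * X j p r := by
      have h := congrFun (congrFun (hcomp Y1 hY1) p) r
      rw [Finset.sum_congr rfl (fun j _ => by rw [hc1 j])] at h
      rw [Matrix.sum_apply] at h
      have hL : Y1 p r = (if c = p ∧ d = r then (1 : ℂ) else 0)
          - (if d = p ∧ c = r then 1 else 0) := by
        simp [hY1def, Matrix.single]
      rw [hL] at h
      rw [h, Finset.mul_sum]
      refine Finset.sum_congr rfl fun j _ => ?_
      simp [Complex.real_smul]
      push_cast
      ring
    have e2 : Complex.I * ((if c = p ∧ d = r then (1 : ℂ) else 0)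
          + (if d = p ∧ c = r then 1 else 0))
        = 2 * (N : ℂ) * ∑ j, ((X j c d).im : ℂ) * X j p r := by
      have h := congrFun (congrFun (hcomp Y2 hY2) p) r
      rw [Finset.sum_congr rfl (fun j _ => by rw [hc2 j])] at h
      rw [Matrix.sum_apply] at h
      have hL : Y2 p r = Complex.I * ((if c = p ∧ d = r then (1 : ℂ) else 0)
          + (if d = p ∧ c = r then 1 else 0)) := by
        simp [hY2def, Matrix.single, mul_add]
      rw [hL] at h
      rw [h, Finset.mul_sum]
      refine Finset.sum_congr rfl fun j _ => ?_
      simp [Complex.real_smul]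
      push_cast
      ring
    have e2' : (if c = p ∧ d = r then (1 : ℂ) else 0) + (if d = p ∧ c = r then 1 else 0)
        = -Complex.I * (2 * (N : ℂ) * ∑ j, ((X j c d).im : ℂ) * X j p r) := by
      rw [← e2]
      rw [← mul_assoc]
      simp [Complex.I_mul_I]
    have hsplit : (∑ j, X j p r * (starRingEnd ℂ) (X j c d))
        = (∑ j, ((X j c d).re : ℂ) * X j p r)
          - Complex.I * ∑ j, ((X j c d).im : ℂ) * X j p r := by
      rw [Finset.mul_sum, ← Finset.sum_sub_distrib]
      refine Finset.sum_congr rfl fun j _ => ?_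
      have hz : (starRingEnd ℂ) (X j c d) = ((X j c d).re : ℂ) - ((X j c d).im : ℂ) * Complex.I := by
        apply Complex.ext <;> simp
      rw [hz]; ring
    have key : (N : ℂ) * (∑ j, X j p r * (starRingEnd ℂ) (X j c d))
        = if c = p ∧ d = r then (1 : ℂ) else 0 := by
      linear_combination (N : ℂ) * hsplit - (2 : ℂ)⁻¹ * e1 - (2 : ℂ)⁻¹ * e2'
    have hiff : (p = c ∧ r = d) ↔ (c = p ∧ d = r) := by
      constructor <;> rintro ⟨h1, h2⟩ <;> exact ⟨h1.symm, h2.symm⟩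
    rw [if_congr hiff rfl rfl,
      show (if c = p ∧ d = r then (N : ℂ)⁻¹ else 0)
          = (N : ℂ)⁻¹ * (if c = p ∧ d = r then (1 : ℂ) else 0) from by
        rw [mul_ite, mul_one, mul_zero],
      ← key, inv_mul_cancel_left₀ hN]
  -- final computation
  intro A
  ext p q
  have hX : ∀ j a b, X j a b = -(starRingEnd ℂ) (X j b a) := by
    intro j a b; rw [hconj j a b]; ring
  have step : ∀ j, (X j * A * X j) p q
      = ∑ r, ∑ s, A r s * (-(X j p r * (starRingEnd ℂ) (X j q s))) := by
    intro j
    have h1 : (X j * A * X j) p q = ∑ s, ∑ r, X j p r * A r s * X j s q := by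
      simp [Matrix.mul_apply, Finset.sum_mul]
    rw [h1, Finset.sum_comm]
    refine Finset.sum_congr rfl fun r _ => Finset.sum_congr rfl fun s _ => ?_
    rw [hX j s q]; ring
  rw [Matrix.sum_apply]
  calc ∑ j, (X j * A * X j) p q
      = ∑ j, ∑ r, ∑ s, A r s * (-(X j p r * (starRingEnd ℂ) (X j q s))) :=
        Finset.sum_congr rfl fun j _ => step j
    _ = ∑ r, ∑ j, ∑ s, A r s * (-(X j p r * (starRingEnd ℂ) (X j q s))) :=
        Finset.sum_comm
    _ = ∑ r, ∑ s, ∑ j, A r s * (-(X j p r * (starRingEnd ℂ) (X j q s))) :=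
        Finset.sum_congr rfl fun r _ => Finset.sum_comm
    _ = ∑ r, ∑ s, A r s * (-(∑ j, X j p r * (starRingEnd ℂ) (X j q s))) := by
        refine Finset.sum_congr rfl fun r _ => Finset.sum_congr rfl fun s _ => ?_
        simp [Finset.mul_sum]
    _ = (-((N : ℂ)⁻¹ * A.trace)) • (1 : Matrix (Fin N) (Fin N) ℂ) p q := by
        simp only [hH]
        by_cases hpq : p = q
        · subst hpq
          simp [Matrix.one_apply, Matrix.trace, Matrix.diag, mul_ite, ite_and,
            Finset.sum_ite_eq', Finset.mul_sum]
          exact Finset.sum_congr rfl fun i _ => mul_comm _ _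
        · simp [Matrix.one_apply, hpq]
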